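/- Let k be a field of characteristic 3, let l, m, n ∈ k with m ≠ 0, let P ∈ k[t] with deg P ≤ 6, and set Δ = t¹² + l t⁹ + m t⁸ − n t⁷ + P ∈ k[t]. Then for all p, q, r ∈ k (not necessarily distinct), the polynomial (t−p)³(t−q)³(t−r)³ does not divide Δ. (Consequently, a rational elliptic surface in characteristic 3 with only multiplicative singular fibres and with b₂ having a repeated root cannot have three multiplicative fibres each of multiplicity at least three.) -/
import Mathlib

open Polynomial

theorem stmt5 {k : Type*} [Field k] [CharP k 3]
    (l m n : k) (hm : m ≠ 0) (P : k[X]) (hP : P.degree ≤ 6)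
    (Δ : k[X])
    (hΔ : Δ = X ^ 12 + C l * X ^ 9 + C m * X ^ 8 - C n * X ^ 7 + P) :
    ∀ p q r : k, ¬ ((X - C p) ^ 3 * (X - C q) ^ 3 * (X - C r) ^ 3 ∣ Δ) := by
  intro p q r hdvd
  obtain ⟨Q, hQ⟩ := hdvd
  -- P coefficients
  have hP8 : P.coeff 8 = 0 := coeff_eq_zero_of_degree_lt (lt_of_le_of_lt hP (by norm_num))
  have hP11 : P.coeff 11 = 0 := coeff_eq_zero_of_degree_lt (lt_of_le_of_lt hP (by norm_num))
  have hP12 : P.coeff 12 = 0 := coeff_eq_zero_of_degree_lt (lt_of_le_of_lt hP (by norm_num))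
  have c12 : Δ.coeff 12 = 1 := by
    rw [hΔ]; simp [coeff_X_pow, hP12]
  have c11 : Δ.coeff 11 = 0 := by
    rw [hΔ]; simp [coeff_X_pow, hP11]
  have c8 : Δ.coeff 8 = m := by
    rw [hΔ]; simp [coeff_X_pow, hP8]
  -- char 3 expansion
  have hG : (X - C p) ^ 3 * (X - C q) ^ 3 * (X - C r) ^ 3
      = X ^ 9 - C (p ^ 3 + q ^ 3 + r ^ 3) * X ^ 6
        + C (p ^ 3 * q ^ 3 + p ^ 3 * r ^ 3 + q ^ 3 * r ^ 3) * X ^ 3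
        - C (p ^ 3 * q ^ 3 * r ^ 3) := by
    rw [sub_pow_char, sub_pow_char, sub_pow_char]
    simp only [map_add, map_mul, map_pow]
    ring
  have hGdeg : ((X - C p) ^ 3 * (X - C q) ^ 3 * (X - C r) ^ 3 : k[X]).degree = 9 := by
    rw [hG]; compute_degree!
  have hGne : ((X - C p) ^ 3 * (X - C q) ^ 3 * (X - C r) ^ 3 : k[X]) ≠ 0 := by
    intro h; rw [h] at hGdeg; simp at hGdeg
  have hΔne : Δ ≠ 0 := by
    intro h; rw [h] at c12; simp at c12
  have hQne : Q ≠ 0 := by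
    intro h; rw [h, mul_zero] at hQ; exact hΔne hQ
  have hdegΔ : Δ.degree ≤ 12 := by
    rw [hΔ]
    refine le_trans (degree_add_le _ _) (max_le ?_ (le_trans hP (by norm_num)))
    compute_degree
  have hnΔ : Δ.natDegree ≤ 12 := natDegree_le_iff_degree_le.2 hdegΔ
  have hnG : ((X - C p) ^ 3 * (X - C q) ^ 3 * (X - C r) ^ 3 : k[X]).natDegree = 9 :=
    natDegree_eq_of_degree_eq_some hGdeg
  have hnQ : Q.natDegree ≤ 3 := by
    have := natDegree_mul hGne hQne
    rw [← hQ, hnG] at this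
    omega
  have hQ5 : Q.coeff 5 = 0 := coeff_eq_zero_of_natDegree_lt (by omega)
  have hQ8 : Q.coeff 8 = 0 := coeff_eq_zero_of_natDegree_lt (by omega)
  have hQ11 : Q.coeff 11 = 0 := coeff_eq_zero_of_natDegree_lt (by omega)
  have key : Δ = Q * X ^ 9 - C (p ^ 3 + q ^ 3 + r ^ 3) * (Q * X ^ 6)
        + C (p ^ 3 * q ^ 3 + p ^ 3 * r ^ 3 + q ^ 3 * r ^ 3) * (Q * X ^ 3)
        - C (p ^ 3 * q ^ 3 * r ^ 3) * Q := by
    rw [hQ, hG]; ring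
  have e11 := congrArg (fun f => coeff f 11) key
  have e8 := congrArg (fun f => coeff f 8) key
  simp only [coeff_add, coeff_sub, coeff_C_mul, coeff_mul_X_pow'] at e11 e8
  norm_num [c11, c8, hQ5, hQ8, hQ11] at e11 e8
  -- e11 : 0 = Q.coeff 2 , e8 : m = -(...) * Q.coeff 2
  exact hm (by rw [e8, ← e11]; ring)
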